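/- Let M, Γ, Ω, χ denote the 3×3 skew-symmetric matrices corresponding to vectors M, Γ, Ω, χ ∈ ℝ³ under the hat isomorphism, and suppose additionally C = I₂·χ and the invariant relation M₁X₀ + M₃Z₀ = 0 with χ = (X₀,0,Z₀) and M = IΩ for I = diag(I₁,I₂,I₃) satisfying the Hess–Appel'rot condition. Then the matrix Lax equation d/dt(λ²C + λM + Γ) = [λ²C + λM + Γ, λχ + Ω] holds for all λ ∈ ℂ if and only if (M,Γ) solves the Euler–Poisson equations Ṁ = [M,Ω] + [Γ,χ], Γ̇ = [Γ,Ω] together with Ḟ₄ = 0 for F₄ = M₁X₀ + M₃Z₀. -/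

import Mathlib

open Matrix

/-- The hat map `a ↦ â` from `ℝ³` to `3×3` skew-symmetric matrices. -/
def hat (a : Fin 3 → ℝ) : Matrix (Fin 3) (Fin 3) ℝ :=
  !![0, -a 2, a 1; a 2, 0, -a 0; -a 1, a 0, 0]

lemma key_alg (I1 I2 I3 X0 Z0 M1 M3 : ℝ) (h12 : I1 > I2) (h23 : I2 > I3) (h3 : I3 > 0)
    (hHA : X0 * Real.sqrt (I1 * (I2 - I3)) + Z0 * Real.sqrt (I3 * (I1 - I2)) = 0)
    (hinv : M1 * X0 + M3 * Z0 = 0) :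
    I2 * (Z0 * M1 * I3 - X0 * M3 * I1) + (M3 * X0 - M1 * Z0) * (I1 * I3) = 0 := by
  have hI1 : I1 > 0 := by linarith
  have h1 : (0:ℝ) ≤ I1 * (I2 - I3) := by nlinarith
  have h2 : (0:ℝ) ≤ I3 * (I1 - I2) := by nlinarith
  have e : X0 * Real.sqrt (I1 * (I2 - I3)) = -(Z0 * Real.sqrt (I3 * (I1 - I2))) := by
    linarith
  have e2 : (X0 * Real.sqrt (I1 * (I2 - I3))) ^ 2 = (Z0 * Real.sqrt (I3 * (I1 - I2))) ^ 2 := by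
    rw [e]; ring
  have hsq : X0 ^ 2 * (I1 * (I2 - I3)) = Z0 ^ 2 * (I3 * (I1 - I2)) := by
    linear_combination e2 - X0 ^ 2 * Real.sq_sqrt h1 + Z0 ^ 2 * Real.sq_sqrt h2
  by_cases hx : X0 = 0
  · have h5 : Z0 ^ 2 * (I3 * (I1 - I2)) = 0 := by rw [← hsq, hx]; ring
    have h6 : (0:ℝ) < I3 * (I1 - I2) := by nlinarith
    have hz : Z0 = 0 := by
      rcases mul_eq_zero.mp h5 with h | h
      · exact (pow_eq_zero_iff two_ne_zero).mp h
      · exact absurd h (ne_of_gt h6)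
    simp [hx, hz]
  · have hM1 : M1 = -(M3 * Z0) / X0 := by
      field_simp; linarith
    rw [hM1]
    field_simp
    ring_nf
    linear_combination (-M3) * hsq

set_option maxHeartbeats 3000000 in
lemma lax_val (I1 I2 I3 X0 Z0 : ℝ) (hI1 : I1 ≠ 0) (hI2 : I2 ≠ 0) (hI3 : I3 ≠ 0)
    (M G : Fin 3 → ℝ)
    (K : I2 * (Z0 * M 0 * I3 - X0 * M 2 * I1) + (M 2 * X0 - M 0 * Z0) * (I1 * I3) = 0)
    (lam : ℝ) (i j : Fin 3) :
    (⁅lam ^ 2 • (I2 • hat ![X0, 0, Z0]) + lam • hat M + hat G,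
       lam • hat ![X0, 0, Z0] + hat ![M 0 / I1, M 1 / I2, M 2 / I3]⁆ : Matrix (Fin 3) (Fin 3) ℝ) i j
    = lam * ((⁅hat M, hat ![M 0 / I1, M 1 / I2, M 2 / I3]⁆
          + ⁅hat G, hat ![X0, 0, Z0]⁆ : Matrix (Fin 3) (Fin 3) ℝ) i j)
      + (⁅hat G, hat ![M 0 / I1, M 1 / I2, M 2 / I3]⁆ : Matrix (Fin 3) (Fin 3) ℝ) i j := by
  fin_cases i <;> fin_cases j <;>
    simp only [hat, Ring.lie_def, Matrix.mul_apply, Fin.sum_univ_succ, Matrix.add_apply,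
      Matrix.smul_apply, Matrix.sub_apply, smul_eq_mul, Fin.sum_univ_zero, add_zero, Matrix.of_apply,
      Fin.succ_zero_eq_one, Fin.succ_one_eq_two, Fin.reduceFinMk,
      Matrix.cons_val', Matrix.cons_val_zero, Matrix.cons_val_one, Matrix.head_cons,
      Matrix.empty_val', Matrix.cons_val_fin_one, Matrix.head_fin_const, Matrix.cons_val_two,
      Matrix.tail_cons, Fin.isValue, Fin.mk_zero, Fin.mk_one] <;>
    field_simp <;>
    first
      | ring1
      | linear_combination lam ^ 2 * K
      | linear_combination (-(lam ^ 2)) * K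
      | linear_combination lam ^ 2 * I2 * K
      | linear_combination (-(lam ^ 2 * I2)) * K

theorem hess_appelrot_lax_representation
    (I1 I2 I3 X0 Z0 : ℝ)
    (hI : I1 > I2 ∧ I2 > I3 ∧ I3 > 0)
    (hHA : X0 * Real.sqrt (I1 * (I2 - I3)) + Z0 * Real.sqrt (I3 * (I1 - I2)) = 0)
    (χ : Fin 3 → ℝ) (hχ : χ = ![X0, 0, Z0])
    (m γ : ℝ → Fin 3 → ℝ)
    (Ω : ℝ → Fin 3 → ℝ) (hΩ : ∀ t i, Ω t i = m t i / ![I1, I2, I3] i)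
    (hm : Differentiable ℝ m) (hγ : Differentiable ℝ γ)
    (hinv : ∀ t, m t 0 * X0 + m t 2 * Z0 = 0) :
    (∀ (lam t : ℝ) (i j : Fin 3),
        HasDerivAt (fun s => (lam ^ 2 • (I2 • hat χ) + lam • hat (m s) + hat (γ s)) i j)
          ((⁅lam ^ 2 • (I2 • hat χ) + lam • hat (m t) + hat (γ t),
             lam • hat χ + hat (Ω t)⁆ : Matrix (Fin 3) (Fin 3) ℝ) i j) t)
    ↔
    ((∀ (t : ℝ) (i j : Fin 3),
        HasDerivAt (fun s => hat (m s) i j)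
          ((⁅hat (m t), hat (Ω t)⁆ + ⁅hat (γ t), hat χ⁆ : Matrix (Fin 3) (Fin 3) ℝ) i j) t) ∧
     (∀ (t : ℝ) (i j : Fin 3),
        HasDerivAt (fun s => hat (γ s) i j)
          ((⁅hat (γ t), hat (Ω t)⁆ : Matrix (Fin 3) (Fin 3) ℝ) i j) t) ∧
     (∀ t : ℝ, HasDerivAt (fun s => m s 0 * X0 + m s 2 * Z0) 0 t)) := by
  obtain ⟨h12, h23, h3⟩ := hI
  subst hχ
  have hI1 : I1 ≠ 0 := ne_of_gt (by linarith)
  have hI2 : I2 ≠ 0 := ne_of_gt (by linarith)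
  have hI3 : I3 ≠ 0 := ne_of_gt (by linarith)
  have hΩt : ∀ t, Ω t = ![m t 0 / I1, m t 1 / I2, m t 2 / I3] := by
    intro t; funext i; fin_cases i <;> simp [hΩ]
  have hK : ∀ t, I2 * (Z0 * m t 0 * I3 - X0 * m t 2 * I1)
      + (m t 2 * X0 - m t 0 * Z0) * (I1 * I3) = 0 := fun t =>
    key_alg I1 I2 I3 X0 Z0 (m t 0) (m t 2) h12 h23 h3 hHA (hinv t)
  have hval : ∀ (lam t : ℝ) (i j : Fin 3),
      (⁅lam ^ 2 • (I2 • hat ![X0, 0, Z0]) + lam • hat (m t) + hat (γ t),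
         lam • hat ![X0, 0, Z0] + hat (Ω t)⁆ : Matrix (Fin 3) (Fin 3) ℝ) i j
      = lam * ((⁅hat (m t), hat (Ω t)⁆
            + ⁅hat (γ t), hat ![X0, 0, Z0]⁆ : Matrix (Fin 3) (Fin 3) ℝ) i j)
        + (⁅hat (γ t), hat (Ω t)⁆ : Matrix (Fin 3) (Fin 3) ℝ) i j := by
    intro lam t i j
    rw [hΩt t]
    exact lax_val I1 I2 I3 X0 Z0 hI1 hI2 hI3 (m t) (γ t) (hK t) lam i j
  constructor
  · intro hL
    refine ⟨?_, ?_, ?_⟩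
    · intro t i j
      have h1 := hL 1 t i j
      have h2 := hL (-1) t i j
      rw [hval 1 t i j] at h1
      rw [hval (-1) t i j] at h2
      have h4 := (h1.sub h2).div_const 2
      have hfe : (fun s => hat (m s) i j)
          = fun s => (((1:ℝ) ^ 2 • (I2 • hat ![X0, 0, Z0]) + (1:ℝ) • hat (m s) + hat (γ s)) i j
            - ((-1:ℝ) ^ 2 • (I2 • hat ![X0, 0, Z0]) + (-1:ℝ) • hat (m s) + hat (γ s)) i j) / 2 := by
        funext s
        simp only [Matrix.add_apply, Matrix.smul_apply, smul_eq_mul]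
        ring
      rw [hfe]
      convert h4 using 1
      all_goals first | rfl | ring
    · intro t i j
      have h0 := hL 0 t i j
      rw [hval 0 t i j] at h0
      have hfe : (fun s => hat (γ s) i j)
          = fun s => ((0:ℝ) ^ 2 • (I2 • hat ![X0, 0, Z0]) + (0:ℝ) • hat (m s) + hat (γ s)) i j := by
        funext s
        simp only [Matrix.add_apply, Matrix.smul_apply, smul_eq_mul]
        ring
      rw [hfe]
      convert h0 using 1
      ring
    · intro t
      have hconst : (fun s => m s 0 * X0 + m s 2 * Z0) = fun _ => (0:ℝ) := funext hinv
      rw [hconst]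
      exact hasDerivAt_const t 0
  · rintro ⟨hM, hG, -⟩
    intro lam t i j
    rw [hval lam t i j]
    have d1 := HasDerivAt.const_mul lam (hM t i j)
    have d0 : HasDerivAt (fun _ : ℝ => (lam ^ 2 • (I2 • hat ![X0, 0, Z0]) : Matrix (Fin 3) (Fin 3) ℝ) i j) 0 t :=
      hasDerivAt_const _ _
    have dd := (d0.add d1).add (hG t i j)
    have hfe : (fun s => (lam ^ 2 • (I2 • hat ![X0, 0, Z0]) + lam • hat (m s) + hat (γ s)) i j)
        = fun s => ((lam ^ 2 • (I2 • hat ![X0, 0, Z0]) : Matrix (Fin 3) (Fin 3) ℝ) i j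
            + lam * hat (m s) i j) + hat (γ s) i j := by
      funext s
      simp only [Matrix.add_apply, Matrix.smul_apply, smul_eq_mul]
    rw [hfe]
    convert dd using 1
    all_goals first | rfl | ring
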